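/- There is an absolute constant c > 0 (independent of G, n, s, and α) such that for every integer i ≥ 0, if n ≥ 2 then ∑_{v∈V} ( ∑_{u ∈ Γ⁺_i(v)} d_u^{s−1} )^2 ≤ c · 2^s · α^{1/s} · μ^{2 − 1/s} · log₂ n. -/

import Mathlib

open Finset

section Helpers

private lemma bridge0 (k : ℕ) (X C a M : ℝ) (hX : 0 ≤ X) (hC : 0 ≤ C) (ha : 0 ≤ a)
    (hM : 0 ≤ M) (h : X ^ (k+1) ≤ C ^ (k+1) * a * M ^ (2*k+1)) :
    X ≤ C * a ^ ((1:ℝ)/((k+1:ℕ):ℝ)) * M ^ ((2:ℝ) - 1/((k+1:ℕ):ℝ)) := by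
  have hc0 : (0:ℝ) < ((k+1:ℕ):ℝ) := by exact_mod_cast Nat.succ_pos k
  have hR0 : (0:ℝ) ≤ C * a ^ ((1:ℝ)/((k+1:ℕ):ℝ)) * M ^ ((2:ℝ) - 1/((k+1:ℕ):ℝ)) :=
    mul_nonneg (mul_nonneg hC (Real.rpow_nonneg ha _)) (Real.rpow_nonneg hM _)
  refine le_of_pow_le_pow_left₀ (Nat.succ_ne_zero k) hR0 ?_
  have har : (a ^ ((1:ℝ)/((k+1:ℕ):ℝ))) ^ (k+1) = a := by
    rw [← Real.rpow_natCast (a ^ ((1:ℝ)/((k+1:ℕ):ℝ))) (k+1), ← Real.rpow_mul ha,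
      one_div, inv_mul_cancel₀ (ne_of_gt hc0), Real.rpow_one]
  have hMr : (M ^ ((2:ℝ) - 1/((k+1:ℕ):ℝ))) ^ (k+1) = M ^ (2*k+1) := by
    rw [← Real.rpow_natCast (M ^ ((2:ℝ) - 1/((k+1:ℕ):ℝ))) (k+1), ← Real.rpow_mul hM]
    rw [show ((2:ℝ) - 1/((k+1:ℕ):ℝ)) * ((k+1:ℕ):ℝ) = ((2*k+1:ℕ):ℝ) by
      have hne : ((k:ℝ)+1) ≠ 0 := by positivity
      push_cast
      field_simp
      ring]
    rw [Real.rpow_natCast]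
  calc X ^ (k+1) ≤ C ^ (k+1) * a * M ^ (2*k+1) := h
    _ = (C * a ^ ((1:ℝ)/((k+1:ℕ):ℝ)) * M ^ ((2:ℝ) - 1/((k+1:ℕ):ℝ))) ^ (k+1) := by
        rw [mul_pow, mul_pow, har, hMr]

private lemma caseA (k : ℕ) (a M T t X : ℝ) (ha : 0 < a) (hT : 0 ≤ T) (ht : 0 < t)
    (hM : 0 ≤ M) (hK : t * T ^ (k+1) ≤ 2 ^ (k+1) * M) (hta : t ≤ a) (hX : 0 ≤ X)
    (hXle : X ≤ t * T ^ k * M) :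
    X ≤ 2 ^ (k+1) * a ^ ((1:ℝ)/((k+1:ℕ):ℝ)) * M ^ ((2:ℝ) - 1/((k+1:ℕ):ℝ)) := by
  refine bridge0 k X (2^(k+1)) a M hX (by positivity) ha.le hM ?_
  have h2M : (0:ℝ) ≤ 2^(k+1) * M := mul_nonneg (by positivity) hM
  calc X ^ (k+1) ≤ (t * T^k * M) ^ (k+1) := pow_le_pow_left₀ hX hXle _
    _ = t * (t * T^(k+1))^k * M^(k+1) := by ring
    _ ≤ t * (2^(k+1) * M)^k * M^(k+1) := by
        refine mul_le_mul_of_nonneg_right (mul_le_mul_of_nonneg_left ?_ ht.le) (pow_nonneg hM _)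
        exact pow_le_pow_left₀ (mul_nonneg ht.le (pow_nonneg hT _)) hK k
    _ ≤ a * (2^(k+1) * M)^k * M^(k+1) := by
        exact mul_le_mul_of_nonneg_right
          (mul_le_mul_of_nonneg_right hta (pow_nonneg h2M k)) (pow_nonneg hM _)
    _ = 2^((k+1)*k) * a * M^(2*k+1) := by ring
    _ ≤ 2^((k+1)*(k+1)) * a * M^(2*k+1) := by
        refine mul_le_mul_of_nonneg_right
          (mul_le_mul_of_nonneg_right ?_ ha.le) (pow_nonneg hM _)
        exact pow_le_pow_right₀ (by norm_num) (Nat.mul_le_mul_left _ (Nat.le_succ k))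
    _ = (2^(k+1))^(k+1) * a * M^(2*k+1) := by rw [← pow_mul]

private lemma caseB (k : ℕ) (a M T t X : ℝ) (ha : 0 < a) (hT : 0 ≤ T) (ht : 0 < t)
    (hM : 0 ≤ M) (hK : t * T ^ (k+1) ≤ 2 ^ (k+1) * M) (hat : a ≤ t) (hX : 0 ≤ X)
    (hXle : X ≤ 2 * a * T ^ k * M) :
    X ≤ 2 ^ (k+1) * a ^ ((1:ℝ)/((k+1:ℕ):ℝ)) * M ^ ((2:ℝ) - 1/((k+1:ℕ):ℝ)) := by
  refine bridge0 k X (2^(k+1)) a M hX (by positivity) ha.le hM ?_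
  have h2a : (0:ℝ) ≤ 2^(k+1) * a := mul_nonneg (by positivity) ha.le
  calc X^(k+1) ≤ (2*a*T^k*M)^(k+1) := pow_le_pow_left₀ hX hXle _
    _ = 2^(k+1) * a * (a*T^(k+1))^k * M^(k+1) := by ring
    _ ≤ 2^(k+1) * a * (t*T^(k+1))^k * M^(k+1) := by
        refine mul_le_mul_of_nonneg_right (mul_le_mul_of_nonneg_left ?_ h2a) (pow_nonneg hM _)
        exact pow_le_pow_left₀ (mul_nonneg ha.le (pow_nonneg hT _))
          (mul_le_mul_of_nonneg_right hat (pow_nonneg hT _)) k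
    _ ≤ 2^(k+1) * a * (2^(k+1)*M)^k * M^(k+1) := by
        refine mul_le_mul_of_nonneg_right (mul_le_mul_of_nonneg_left ?_ h2a) (pow_nonneg hM _)
        exact pow_le_pow_left₀ (mul_nonneg ht.le (pow_nonneg hT _)) hK k
    _ = 2^((k+1)+(k+1)*k) * a * M^(2*k+1) := by ring
    _ = (2^(k+1))^(k+1) * a * M^(2*k+1) := by
        rw [← pow_mul, show (k+1)+(k+1)*k = (k+1)*(k+1) from by ring]

private lemma caseC (k : ℕ) (a M T E t X : ℝ) (ha : 0 < a) (hT : 0 ≤ T) (ht : 0 < t)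
    (hM : 0 ≤ M) (hE : 0 ≤ E) (hEt : E ≤ t)
    (hKE : t * E ^ (k+1) ≤ 2 ^ (k+1) * M) (hKT : t * T ^ (k+1) ≤ 2 ^ (k+1) * M)
    (hX : 0 ≤ X)
    (hXle : X ≤ (T^(k+1)*M) ^ (((k:ℕ):ℝ)/((k+1:ℕ):ℝ)) *
      (E^(2*k+1)*(2*a*t)) ^ ((1:ℝ)/((k+1:ℕ):ℝ))) :
    X ≤ 2 ^ (k+2) * a ^ ((1:ℝ)/((k+1:ℕ):ℝ)) * M ^ ((2:ℝ) - 1/((k+1:ℕ):ℝ)) := by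
  have hc0 : (0:ℝ) < ((k+1:ℕ):ℝ) := by exact_mod_cast Nat.succ_pos k
  have hTM : (0:ℝ) ≤ T^(k+1)*M := mul_nonneg (pow_nonneg hT _) hM
  have h2at : (0:ℝ) ≤ 2*a*t := mul_nonneg (mul_nonneg (by norm_num) ha.le) ht.le
  have hEat : (0:ℝ) ≤ E^(2*k+1)*(2*a*t) := mul_nonneg (pow_nonneg hE _) h2at
  have h2M : (0:ℝ) ≤ (2:ℝ)^(k+1)*M := mul_nonneg (by positivity) hM
  refine bridge0 k X (2^(k+2)) a M hX (by positivity) ha.le hM ?_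
  have hid1 : ((T^(k+1)*M) ^ (((k:ℕ):ℝ)/((k+1:ℕ):ℝ)))^(k+1) = (T^(k+1)*M)^k := by
    rw [← Real.rpow_natCast ((T^(k+1)*M) ^ (((k:ℕ):ℝ)/((k+1:ℕ):ℝ))) (k+1),
      ← Real.rpow_mul hTM, div_mul_cancel₀ _ (ne_of_gt hc0), Real.rpow_natCast]
  have hid2 : ((E^(2*k+1)*(2*a*t)) ^ ((1:ℝ)/((k+1:ℕ):ℝ)))^(k+1) = E^(2*k+1)*(2*a*t) := by
    rw [← Real.rpow_natCast ((E^(2*k+1)*(2*a*t)) ^ ((1:ℝ)/((k+1:ℕ):ℝ))) (k+1),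
      ← Real.rpow_mul hEat, one_div, inv_mul_cancel₀ (ne_of_gt hc0), Real.rpow_one]
  have hmain : (T^(k+1)*M)^k * (E^(2*k+1)*(2*a*t)) ≤ 2^((k+2)*(k+1)) * a * M^(2*k+1) := by
    refine le_of_mul_le_mul_right ?_ (pow_pos ht k)
    calc (T^(k+1)*M)^k * (E^(2*k+1)*(2*a*t)) * t^k
        = 2*a*((t*T^(k+1))^k * (M^k * ((t*E^(k+1))*E^k))) := by ring
      _ ≤ 2*a*((2^(k+1)*M)^k * (M^k * ((2^(k+1)*M)*E^k))) := by
          have h2a : (0:ℝ) ≤ 2*a := by linarith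
          refine mul_le_mul_of_nonneg_left ?_ h2a
          refine mul_le_mul (pow_le_pow_left₀ (mul_nonneg ht.le (pow_nonneg hT _)) hKT k)
            ?_ ?_ (pow_nonneg h2M k)
          · exact mul_le_mul_of_nonneg_left
              (mul_le_mul_of_nonneg_right hKE (pow_nonneg hE k)) (pow_nonneg hM k)
          · exact mul_nonneg (pow_nonneg hM k)
              (mul_nonneg (mul_nonneg ht.le (pow_nonneg hE _)) (pow_nonneg hE k))
      _ ≤ 2*a*((2^(k+1)*M)^k * (M^k * ((2^(k+1)*M)*t^k))) := by
          have h2a : (0:ℝ) ≤ 2*a := by linarith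
          refine mul_le_mul_of_nonneg_left (mul_le_mul_of_nonneg_left
            (mul_le_mul_of_nonneg_left (mul_le_mul_of_nonneg_left
              (pow_le_pow_left₀ hE hEt k) h2M) (pow_nonneg hM k)) (pow_nonneg h2M k)) h2a
      _ = (2^((k+1)*k + (k+1) + 1) * a * M^(2*k+1)) * t^k := by ring
      _ ≤ (2^((k+2)*(k+1)) * a * M^(2*k+1)) * t^k := by
          refine mul_le_mul_of_nonneg_right (mul_le_mul_of_nonneg_right
            (mul_le_mul_of_nonneg_right ?_ ha.le) (pow_nonneg hM _)) (pow_nonneg ht.le k)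
          refine pow_le_pow_right₀ (by norm_num) ?_
          have : (k+2)*(k+1) = (k+1)*k + (k+1) + 1 + k := by ring
          omega
  calc X^(k+1) ≤ ((T^(k+1)*M) ^ (((k:ℕ):ℝ)/((k+1:ℕ):ℝ)) *
        (E^(2*k+1)*(2*a*t)) ^ ((1:ℝ)/((k+1:ℕ):ℝ)))^(k+1) := pow_le_pow_left₀ hX hXle _
    _ = (T^(k+1)*M)^k * (E^(2*k+1)*(2*a*t)) := by rw [mul_pow, hid1, hid2]
    _ ≤ 2^((k+2)*(k+1)) * a * M^(2*k+1) := hmain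
    _ = (2^(k+2))^(k+1) * a * M^(2*k+1) := by rw [← pow_mul]

end Helpers

set_option maxHeartbeats 1000000 in
theorem exists_const_sum_sq_level_le :
    ∃ c : ℝ, 0 < c ∧
      ∀ (V : Type) [Fintype V] [DecidableEq V]
        (G : SimpleGraph V) [DecidableRel G.Adj]
        (s : ℕ), 1 ≤ s →
      ∀ (prec : V → V → Prop) [DecidableRel prec] [IsStrictTotalOrder V prec],
        (∀ u v : V, G.degree u < G.degree v → prec u v) →
      ∀ (α : ℝ), 1 ≤ α →
        (∀ S : Finset V,
          ((G.edgeFinset.filter (fun e => ∀ x ∈ e, x ∈ S)).card : ℝ) ≤ α * S.card) →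
      ∀ (i : ℕ) (Ui : Finset V),
        (∀ u : V, u ∈ Ui ↔
          (2 : ℝ) ^ ((i : ℝ) - 1) < (G.degree u : ℝ) ∧ (G.degree u : ℝ) ≤ 2 ^ i) →
      2 ≤ Fintype.card V →
      ∑ v : V, (∑ u ∈ ((G.neighborFinset v).filter (fun u => prec v u)) ∩ Ui,
          (G.degree u : ℝ) ^ (s - 1)) ^ 2 ≤
        c * 2 ^ s * α ^ ((1 : ℝ) / (s : ℝ)) *
          (∑ v : V, (G.degree v : ℝ) ^ s) ^ ((2 : ℝ) - 1 / (s : ℝ)) *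
          Real.logb 2 (Fintype.card V) := by
  refine ⟨4, by norm_num, ?_⟩
  intro V _ _ G _ s hs prec _ _ hmono α hα hdeg i Ui hUi hn
  classical
  obtain ⟨k, rfl⟩ : ∃ k, s = k + 1 := ⟨s - 1, by omega⟩
  simp only [Nat.add_sub_cancel]
  have hα0 : (0:ℝ) < α := lt_of_lt_of_le one_pos hα
  set μ : ℝ := ∑ v : V, (G.degree v : ℝ) ^ (k+1) with hμdef
  have hμ0 : (0:ℝ) ≤ μ := sum_nonneg fun v _ => by positivity
  let A : V → Finset V := fun v => ((G.neighborFinset v).filter (fun u => prec v u)) ∩ Ui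
  let S : V → ℝ := fun v => ∑ u ∈ A v, (G.degree u : ℝ) ^ k
  have hS0 : ∀ v, 0 ≤ S v := fun v => sum_nonneg (fun u _ => by positivity)
  have hAU : ∀ v, A v ⊆ Ui := fun v => inter_subset_right
  have hAnb : ∀ v, A v ⊆ G.neighborFinset v := fun v =>
    inter_subset_left.trans (filter_subset _ _)
  have hAprec : ∀ {v u : V}, u ∈ A v → prec v u := by
    intro v u hu
    have h1 : u ∈ (G.neighborFinset v).filter (fun u => prec v u) := mem_of_mem_inter_left hu
    exact (mem_filter.mp h1).2
  have hAdeg : ∀ {v u : V}, u ∈ A v → G.degree v ≤ G.degree u := by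
    intro v u hu
    by_contra hlt
    push_neg at hlt
    exact absurd (trans_of prec (hAprec hu) (hmono u v hlt)) (irrefl_of prec v)
  -- log term
  have hcard2 : (2:ℝ) ≤ (Fintype.card V : ℝ) := by exact_mod_cast hn
  have hcardpos : (0:ℝ) < (Fintype.card V : ℝ) := by linarith
  have hlogb : (1:ℝ) ≤ Real.logb 2 (Fintype.card V) := by
    rw [Real.le_logb_iff_rpow_le (by norm_num) hcardpos, Real.rpow_one]
    exact hcard2
  -- main reduction
  suffices H : ∑ v : V, S v ^ 2 ≤
      4 * 2 ^ (k+1) * α ^ ((1:ℝ)/((k+1:ℕ):ℝ)) * μ ^ ((2:ℝ) - 1/((k+1:ℕ):ℝ)) by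
    have hK : (0:ℝ) ≤ 4 * 2 ^ (k+1) * α ^ ((1:ℝ)/((k+1:ℕ):ℝ)) * μ ^ ((2:ℝ) - 1/((k+1:ℕ):ℝ)) :=
      mul_nonneg (mul_nonneg (mul_nonneg (by norm_num) (by positivity))
        (Real.rpow_nonneg hα0.le _)) (Real.rpow_nonneg hμ0 _)
    exact H.trans (le_mul_of_one_le_right hK hlogb)
  -- swap lemma
  have swap : ∀ (B : Finset V) (F : V → V → ℝ),
      ∑ v ∈ B, ∑ u ∈ A v, F v u
        = ∑ u ∈ Ui, ∑ v ∈ B.filter (fun v => u ∈ A v), F v u := by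
    intro B F
    have h1 : ∀ v : V, ∑ u ∈ A v, F v u = ∑ u ∈ Ui, if u ∈ A v then F v u else 0 := by
      intro v
      rw [← sum_filter]
      apply sum_congr
      · ext u
        simp only [mem_filter]
        exact ⟨fun h => ⟨hAU v h, h⟩, fun h => h.2⟩
      · intro u _; rfl
    calc ∑ v ∈ B, ∑ u ∈ A v, F v u
        = ∑ v ∈ B, ∑ u ∈ Ui, if u ∈ A v then F v u else 0 :=
          sum_congr rfl fun v _ => h1 v
      _ = ∑ u ∈ Ui, ∑ v ∈ B, if u ∈ A v then F v u else 0 := sum_comm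
      _ = ∑ u ∈ Ui, ∑ v ∈ B.filter (fun v => u ∈ A v), F v u :=
          sum_congr rfl fun u _ => (sum_filter _ _).symm
  -- the case of an empty level
  by_cases hUne : Ui.Nonempty
  swap
  · have hUe : Ui = ∅ := not_nonempty_iff_eq_empty.mp hUne
    have hz : ∀ v : V, S v = 0 := by
      intro v
      have hAe : A v = ∅ := by
        refine eq_empty_of_forall_notMem fun u hu => ?_
        have := hAU v hu
        simp [hUe] at this
      show ∑ u ∈ A v, (G.degree u : ℝ) ^ k = 0
      rw [hAe, sum_empty]
    have : ∑ v : V, S v ^ 2 = 0 := by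
      refine sum_eq_zero fun v _ => ?_
      rw [hz v]; ring
    rw [this]
    exact mul_nonneg (mul_nonneg (mul_nonneg (by norm_num) (by positivity))
      (Real.rpow_nonneg hα0.le _)) (Real.rpow_nonneg hμ0 _)
  -- nonempty level: basic quantities
  obtain ⟨u₀, hu₀U, hu₀max⟩ := Finset.exists_max_image Ui (fun u => G.degree u) hUne
  have hT0 : (0:ℝ) ≤ (G.degree u₀ : ℝ) := Nat.cast_nonneg _
  have hTub : ∀ u ∈ Ui, (G.degree u : ℝ) ≤ (G.degree u₀ : ℝ) :=
    fun u hu => Nat.cast_le.mpr (hu₀max u hu)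
  have hU1 : ∀ u ∈ Ui, (1:ℝ) ≤ (G.degree u : ℝ) := by
    intro u hu
    have h1 := ((hUi u).mp hu).1
    have h2 : (2:ℝ) ^ (-1:ℝ) ≤ (2:ℝ) ^ ((i:ℝ)-1) := by
      refine Real.rpow_le_rpow_of_exponent_le (by norm_num) ?_
      have : (0:ℝ) ≤ (i:ℝ) := Nat.cast_nonneg i
      linarith
    rw [Real.rpow_neg_one] at h2
    have h3 : (2:ℝ)⁻¹ < (G.degree u:ℝ) := lt_of_le_of_lt h2 h1
    have h4 : (0:ℝ) < (G.degree u:ℝ) := lt_trans (by norm_num) h3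
    have h5 : 0 < G.degree u := by exact_mod_cast h4
    exact Nat.one_le_cast.mpr h5
  have hT1 : (1:ℝ) ≤ (G.degree u₀ : ℝ) := hU1 u₀ hu₀U
  have hT2 : ∀ u ∈ Ui, (G.degree u₀ : ℝ) ≤ 2*(G.degree u:ℝ) := by
    intro u hu
    have h1 : (G.degree u₀:ℝ) ≤ (2:ℝ)^(i:ℕ) := ((hUi u₀).mp hu₀U).2
    have h2 : (2:ℝ)^(i:ℕ) = 2 * (2:ℝ)^((i:ℝ)-1) := by
      rw [Real.rpow_sub (by norm_num : (0:ℝ) < 2), Real.rpow_one, Real.rpow_natCast]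
      ring
    have h3 := ((hUi u).mp hu).1
    calc (G.degree u₀:ℝ) ≤ (2:ℝ)^(i:ℕ) := h1
      _ = 2*(2:ℝ)^((i:ℝ)-1) := h2
      _ ≤ 2*(G.degree u:ℝ) := by linarith
  have ht1 : 0 < Ui.card := card_pos.mpr hUne
  have htr1 : (1:ℝ) ≤ (Ui.card:ℝ) := Nat.one_le_cast.mpr ht1
  have ht0 : (0:ℝ) < (Ui.card:ℝ) := by linarith
  set M : ℝ := ∑ u ∈ Ui, (G.degree u:ℝ)^(k+1) with hMdef
  have hM0 : (0:ℝ) ≤ M := sum_nonneg fun u _ => by positivity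
  have hMμ : M ≤ μ :=
    sum_le_sum_of_subset_of_nonneg (subset_univ Ui) (fun v _ _ => by positivity)
  have hK2 : (Ui.card:ℝ) * (G.degree u₀:ℝ)^(k+1) ≤ 2^(k+1) * M := by
    calc (Ui.card:ℝ) * (G.degree u₀:ℝ)^(k+1) = ∑ _u ∈ Ui, (G.degree u₀:ℝ)^(k+1) := by
          rw [sum_const, nsmul_eq_mul]
      _ ≤ ∑ u ∈ Ui, (2*(G.degree u:ℝ))^(k+1) :=
          sum_le_sum fun u hu => pow_le_pow_left₀ hT0 (hT2 u hu) (k+1)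
      _ = 2^(k+1)*M := by
          rw [hMdef, mul_sum]
          exact sum_congr rfl fun u hu => by rw [mul_pow]
  have hSle : ∀ v : V, S v ≤ (G.degree u₀:ℝ)^k * ((A v).card:ℝ) := by
    intro v
    calc S v ≤ ∑ u ∈ A v, (G.degree u₀:ℝ)^k :=
          sum_le_sum fun u hu => pow_le_pow_left₀ (Nat.cast_nonneg _) (hTub u (hAU v hu)) k
      _ = (G.degree u₀:ℝ)^k * ((A v).card:ℝ) := by
          rw [sum_const, nsmul_eq_mul, mul_comm]
  have hcard_le_deg : ∀ (B : Finset V) (u : V),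
      ((B.filter (fun v => u ∈ A v)).card : ℝ) ≤ (G.degree u:ℝ) := by
    intro B u
    have hsub : B.filter (fun v => u ∈ A v) ⊆ G.neighborFinset u := by
      intro v hv
      have hu : u ∈ A v := (mem_filter.mp hv).2
      have hadj : G.Adj v u := (SimpleGraph.mem_neighborFinset _ _ _).mp (hAnb v hu)
      exact (SimpleGraph.mem_neighborFinset _ _ _).mpr hadj.symm
    calc ((B.filter (fun v => u ∈ A v)).card:ℝ)
        ≤ ((G.neighborFinset u).card:ℝ) := Nat.cast_le.mpr (card_le_card hsub)
      _ = (G.degree u:ℝ) := by rw [SimpleGraph.card_neighborFinset_eq_degree]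
  have hSsum : ∑ v : V, S v ≤ M := by
    calc ∑ v : V, S v
        = ∑ u ∈ Ui, ∑ v ∈ univ.filter (fun v => u ∈ A v), (G.degree u:ℝ)^k :=
          swap univ (fun _ u => (G.degree u:ℝ)^k)
      _ = ∑ u ∈ Ui, ((univ.filter (fun v => u ∈ A v)).card:ℝ) * (G.degree u:ℝ)^k :=
          sum_congr rfl fun u _ => by rw [sum_const, nsmul_eq_mul]
      _ ≤ ∑ u ∈ Ui, (G.degree u:ℝ) * (G.degree u:ℝ)^k :=
          sum_le_sum fun u _ =>
            mul_le_mul_of_nonneg_right (hcard_le_deg univ u) (by positivity)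
      _ = M := sum_congr rfl fun u _ => by rw [← pow_succ']
  -- final combining helper
  have hfin : ∀ X c1 : ℝ, 0 ≤ c1 → c1 ≤ 3 * 2^(k+1) →
      X ≤ c1 * α ^ ((1:ℝ)/((k+1:ℕ):ℝ)) * M ^ ((2:ℝ) - 1/((k+1:ℕ):ℝ)) →
      X ≤ 4 * 2 ^ (k+1) * α ^ ((1:ℝ)/((k+1:ℕ):ℝ)) * μ ^ ((2:ℝ) - 1/((k+1:ℕ):ℝ)) := by
    intro X c1 hc10 hc13 hX
    have hc0 : (0:ℝ) < ((k+1:ℕ):ℝ) := by exact_mod_cast Nat.succ_pos k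
    have hexp0 : (0:ℝ) ≤ (2:ℝ) - 1/((k+1:ℕ):ℝ) := by
      have h1 : (1:ℝ) ≤ ((k+1:ℕ):ℝ) := by exact_mod_cast Nat.succ_le_succ (Nat.zero_le k)
      have h2 : (1:ℝ)/((k+1:ℕ):ℝ) ≤ 1 := by
        rw [div_le_one hc0]; exact h1
      linarith
    have hMr : M ^ ((2:ℝ) - 1/((k+1:ℕ):ℝ)) ≤ μ ^ ((2:ℝ) - 1/((k+1:ℕ):ℝ)) :=
      Real.rpow_le_rpow hM0 hMμ hexp0
    have har : (0:ℝ) ≤ α ^ ((1:ℝ)/((k+1:ℕ):ℝ)) := Real.rpow_nonneg hα0.le _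
    calc X ≤ c1 * α ^ ((1:ℝ)/((k+1:ℕ):ℝ)) * M ^ ((2:ℝ) - 1/((k+1:ℕ):ℝ)) := hX
      _ ≤ (3*2^(k+1)) * α ^ ((1:ℝ)/((k+1:ℕ):ℝ)) * M ^ ((2:ℝ) - 1/((k+1:ℕ):ℝ)) :=
          mul_le_mul_of_nonneg_right (mul_le_mul_of_nonneg_right hc13 har)
            (Real.rpow_nonneg hM0 _)
      _ ≤ (4*2^(k+1)) * α ^ ((1:ℝ)/((k+1:ℕ):ℝ)) * μ ^ ((2:ℝ) - 1/((k+1:ℕ):ℝ)) := by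
          refine mul_le_mul (mul_le_mul_of_nonneg_right
              (mul_le_mul_of_nonneg_right (by norm_num : (3:ℝ) ≤ 4) (by positivity)) har) hMr
            (Real.rpow_nonneg hM0 _) (mul_nonneg (by positivity) har)
  rcases le_or_gt (Ui.card:ℝ) α with htα | hαt
  · -- Case 1 : t ≤ α
    have hSmax : ∀ v : V, S v ≤ (G.degree u₀:ℝ)^k * (Ui.card:ℝ) := by
      intro v
      calc S v ≤ (G.degree u₀:ℝ)^k * ((A v).card:ℝ) := hSle v
        _ ≤ (G.degree u₀:ℝ)^k * (Ui.card:ℝ) := by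
            refine mul_le_mul_of_nonneg_left ?_ (by positivity)
            exact Nat.cast_le.mpr (card_le_card (hAU v))
    have hX1 : ∑ v : V, S v ^ 2 ≤ (Ui.card:ℝ) * (G.degree u₀:ℝ)^k * M := by
      calc ∑ v : V, S v^2 ≤ ∑ v : V, ((Ui.card:ℝ) * (G.degree u₀:ℝ)^k) * S v := by
            refine sum_le_sum fun v _ => ?_
            rw [sq]
            refine mul_le_mul_of_nonneg_right ?_ (hS0 v)
            calc S v ≤ (G.degree u₀:ℝ)^k * (Ui.card:ℝ) := hSmax v
              _ = (Ui.card:ℝ) * (G.degree u₀:ℝ)^k := by ring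
        _ = ((Ui.card:ℝ) * (G.degree u₀:ℝ)^k) * ∑ v : V, S v := by rw [mul_sum]
        _ ≤ ((Ui.card:ℝ) * (G.degree u₀:ℝ)^k) * M := by
            refine mul_le_mul_of_nonneg_left hSsum (by positivity)
        _ = (Ui.card:ℝ) * (G.degree u₀:ℝ)^k * M := by ring
    refine hfin _ (2^(k+1)) (by positivity) (by nlinarith [pow_pos (by norm_num : (0:ℝ) < 2) (k+1)]) ?_
    exact caseA k α M (G.degree u₀:ℝ) (Ui.card:ℝ) _ hα0 hT0 ht0 hM0 hK2 htα
      (sum_nonneg fun v _ => sq_nonneg _) hX1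
  · -- Case 2 : α < t
    set B : Finset V := univ.filter (fun v => 2*α < ((A v).card:ℝ)) with hBdef
    have hBmem : ∀ {v : V}, v ∈ B → 2*α < ((A v).card:ℝ) := fun hv => (mem_filter.mp hv).2
    -- edge counting via injection into edges inside B ∪ Ui
    have hBedge : ∑ v ∈ B, ((A v).card:ℝ) ≤ α * ((B.card:ℝ) + (Ui.card:ℝ)) := by
      have hinj : Set.InjOn (fun p : (_ : V) × V => s(p.1, p.2))
          ↑(B.sigma fun v => A v) := by
        rintro ⟨a, b⟩ hp ⟨c, d⟩ hq hfe
        simp only [Finset.coe_sigma, Set.mem_sigma_iff, Finset.mem_coe] at hp hq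
        simp only at hfe
        rcases Sym2.eq_iff.mp hfe with ⟨h1, h2⟩ | ⟨h1, h2⟩
        · subst h1; subst h2; rfl
        · exfalso
          subst h1; subst h2
          exact absurd (trans_of prec (hAprec hp.2) (hAprec hq.2)) (irrefl_of prec a)
      have himg : ((B.sigma fun v => A v).image (fun p => s(p.1, p.2)))
          ⊆ G.edgeFinset.filter (fun e => ∀ x ∈ e, x ∈ B ∪ Ui) := by
        intro e he
        obtain ⟨⟨a, b⟩, hp, rfl⟩ := Finset.mem_image.mp he
        obtain ⟨ha, hb⟩ := Finset.mem_sigma.mp hp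
        refine mem_filter.mpr ⟨?_, ?_⟩
        · rw [SimpleGraph.mem_edgeFinset]
          exact (SimpleGraph.mem_neighborFinset _ _ _).mp (hAnb a hb)
        · intro x hx
          rcases Sym2.mem_iff.mp hx with rfl | rfl
          · exact mem_union_left _ ha
          · exact mem_union_right _ (hAU a hb)
      have h1 : ∑ v ∈ B, (A v).card = (B.sigma fun v => A v).card :=
        (Finset.card_sigma _ _).symm
      have h2 : (B.sigma fun v => A v).card
          = ((B.sigma fun v => A v).image (fun p => s(p.1, p.2))).card :=
        (Finset.card_image_of_injOn hinj).symm
      have h3 : ((B.sigma fun v => A v).image (fun p => s(p.1, p.2))).card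
          ≤ (G.edgeFinset.filter (fun e => ∀ x ∈ e, x ∈ B ∪ Ui)).card :=
        card_le_card himg
      have h4 : ((G.edgeFinset.filter (fun e => ∀ x ∈ e, x ∈ B ∪ Ui)).card : ℝ)
          ≤ α * ((B ∪ Ui).card : ℝ) := hdeg (B ∪ Ui)
      have h5 : ((B ∪ Ui).card : ℝ) ≤ (B.card:ℝ) + (Ui.card:ℝ) := by
        exact_mod_cast card_union_le B Ui
      calc ∑ v ∈ B, ((A v).card:ℝ)
          = ((∑ v ∈ B, (A v).card : ℕ) : ℝ) := by rw [Nat.cast_sum]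
        _ = (((B.sigma fun v => A v).image (fun p => s(p.1, p.2))).card : ℝ) := by
            rw [h1, h2]
        _ ≤ ((G.edgeFinset.filter (fun e => ∀ x ∈ e, x ∈ B ∪ Ui)).card : ℝ) :=
            Nat.cast_le.mpr h3
        _ ≤ α * ((B ∪ Ui).card : ℝ) := h4
        _ ≤ α * ((B.card:ℝ) + (Ui.card:ℝ)) := mul_le_mul_of_nonneg_left h5 hα0.le
    have hB2α : 2*α*(B.card:ℝ) ≤ ∑ v ∈ B, ((A v).card:ℝ) := by
      calc 2*α*(B.card:ℝ) = ∑ _v ∈ B, 2*α := by rw [sum_const, nsmul_eq_mul]; ring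
        _ ≤ ∑ v ∈ B, ((A v).card:ℝ) := sum_le_sum fun v hv => (hBmem hv).le
    have hBt : (B.card:ℝ) ≤ (Ui.card:ℝ) := by
      have h2 : α*(B.card:ℝ) ≤ α*(Ui.card:ℝ) := by linarith [hB2α.trans hBedge]
      exact le_of_mul_le_mul_left h2 hα0
    have hBsum : ∑ v ∈ B, ((A v).card:ℝ) ≤ 2*α*(Ui.card:ℝ) := by
      calc ∑ v ∈ B, ((A v).card:ℝ) ≤ α*((B.card:ℝ) + (Ui.card:ℝ)) := hBedge
        _ ≤ α*((Ui.card:ℝ) + (Ui.card:ℝ)) := by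
            refine mul_le_mul_of_nonneg_left (by linarith) hα0.le
        _ = 2*α*(Ui.card:ℝ) := by ring
    -- the quantity E = min (max degree in Ui) (|Ui|)
    have hE0 : (0:ℝ) ≤ min (G.degree u₀:ℝ) (Ui.card:ℝ) := le_min hT0 ht0.le
    have hET : min (G.degree u₀:ℝ) (Ui.card:ℝ) ≤ (G.degree u₀:ℝ) := min_le_left _ _
    have hEt : min (G.degree u₀:ℝ) (Ui.card:ℝ) ≤ (Ui.card:ℝ) := min_le_right _ _
    have hEM : (Ui.card:ℝ) * (min (G.degree u₀:ℝ) (Ui.card:ℝ))^(k+1) ≤ 2^(k+1)*M := by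
      calc (Ui.card:ℝ) * (min (G.degree u₀:ℝ) (Ui.card:ℝ))^(k+1)
          ≤ (Ui.card:ℝ) * (G.degree u₀:ℝ)^(k+1) :=
            mul_le_mul_of_nonneg_left (pow_le_pow_left₀ hE0 hET _) ht0.le
        _ ≤ 2^(k+1)*M := hK2
    have heE : ∀ v ∈ B, ((A v).card : ℝ) ≤ min (G.degree u₀:ℝ) (Ui.card:ℝ) := by
      intro v hv
      have hlt := hBmem hv
      have hpos : 0 < (A v).card := by
        by_contra h
        push_neg at h
        have h0 : (A v).card = 0 := Nat.le_zero.mp h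
        rw [h0] at hlt
        norm_num at hlt
        linarith
      obtain ⟨u, hu⟩ := card_pos.mp hpos
      refine le_min ?_ ?_
      · calc ((A v).card:ℝ) ≤ (G.degree v:ℝ) := by
              calc ((A v).card:ℝ) ≤ ((G.neighborFinset v).card:ℝ) :=
                    Nat.cast_le.mpr (card_le_card (hAnb v))
                _ = (G.degree v:ℝ) := by rw [SimpleGraph.card_neighborFinset_eq_degree]
          _ ≤ (G.degree u:ℝ) := Nat.cast_le.mpr (hAdeg hu)
          _ ≤ (G.degree u₀:ℝ) := hTub u (hAU v hu)
      · exact Nat.cast_le.mpr (card_le_card (hAU v))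
    have hbbE : ∀ u ∈ Ui, ((B.filter (fun v => u ∈ A v)).card:ℝ)
        ≤ min (G.degree u₀:ℝ) (Ui.card:ℝ) := by
      intro u hu
      refine le_min ?_ ?_
      · exact (hcard_le_deg B u).trans (hTub u hu)
      · calc ((B.filter (fun v => u ∈ A v)).card:ℝ) ≤ (B.card:ℝ) :=
              Nat.cast_le.mpr (card_le_card (filter_subset _ _))
          _ ≤ (Ui.card:ℝ) := hBt
    have hβle : ∀ u ∈ Ui, ∑ v ∈ B.filter (fun v => u ∈ A v), ((A v).card:ℝ)
        ≤ min (G.degree u₀:ℝ) (Ui.card:ℝ) * ((B.filter (fun v => u ∈ A v)).card:ℝ) := by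
      intro u hu
      calc ∑ v ∈ B.filter (fun v => u ∈ A v), ((A v).card:ℝ)
          ≤ ∑ v ∈ B.filter (fun v => u ∈ A v), min (G.degree u₀:ℝ) (Ui.card:ℝ) :=
            sum_le_sum fun v hv => heE v (mem_of_mem_filter v hv)
        _ = min (G.degree u₀:ℝ) (Ui.card:ℝ) * ((B.filter (fun v => u ∈ A v)).card:ℝ) := by
            rw [sum_const, nsmul_eq_mul, mul_comm]
    have hbbsum : ∑ u ∈ Ui, ((B.filter (fun v => u ∈ A v)).card:ℝ) ≤ 2*α*(Ui.card:ℝ) := by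
      have h1 : ∑ u ∈ Ui, ((B.filter (fun v => u ∈ A v)).card:ℝ)
          = ∑ v ∈ B, ((A v).card:ℝ) := by
        calc ∑ u ∈ Ui, ((B.filter (fun v => u ∈ A v)).card:ℝ)
            = ∑ u ∈ Ui, ∑ _v ∈ B.filter (fun v => u ∈ A v), (1:ℝ) := by
              refine sum_congr rfl fun u _ => ?_
              rw [sum_const, nsmul_eq_mul, mul_one]
          _ = ∑ v ∈ B, ∑ _u ∈ A v, (1:ℝ) := (swap B (fun _ _ => (1:ℝ))).symm
          _ = ∑ v ∈ B, ((A v).card:ℝ) := by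
              refine sum_congr rfl fun v _ => ?_
              rw [sum_const, nsmul_eq_mul, mul_one]
      rw [h1]
      exact hBsum
    -- split the sum into big and small vertices
    have hsplit : ∑ v : V, S v^2
        = ∑ v ∈ B, S v^2 + ∑ v ∈ univ.filter (fun v => ¬ 2*α < ((A v).card:ℝ)), S v^2 := by
      rw [hBdef]
      exact (sum_filter_add_sum_filter_not univ _ _).symm
    -- small part
    have hsmall : ∑ v ∈ univ.filter (fun v => ¬ 2*α < ((A v).card:ℝ)), S v^2
        ≤ 2*α*(G.degree u₀:ℝ)^k*M := by
      have h2aT : (0:ℝ) ≤ 2*α*(G.degree u₀:ℝ)^k :=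
        mul_nonneg (mul_nonneg (by norm_num) hα0.le) (by positivity)
      calc ∑ v ∈ univ.filter (fun v => ¬ 2*α < ((A v).card:ℝ)), S v^2
          ≤ ∑ v ∈ univ.filter (fun v => ¬ 2*α < ((A v).card:ℝ)), (2*α*(G.degree u₀:ℝ)^k) * S v := by
            refine sum_le_sum fun v hv => ?_
            have h2 : ((A v).card:ℝ) ≤ 2*α := not_lt.mp (mem_filter.mp hv).2
            have h3 : S v ≤ 2*α*(G.degree u₀:ℝ)^k := by
              calc S v ≤ (G.degree u₀:ℝ)^k*((A v).card:ℝ) := hSle v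
                _ ≤ (G.degree u₀:ℝ)^k*(2*α) := mul_le_mul_of_nonneg_left h2 (by positivity)
                _ = 2*α*(G.degree u₀:ℝ)^k := by ring
            rw [sq]
            exact mul_le_mul_of_nonneg_right h3 (hS0 v)
        _ = (2*α*(G.degree u₀:ℝ)^k) * ∑ v ∈ univ.filter (fun v => ¬ 2*α < ((A v).card:ℝ)), S v := by
            rw [mul_sum]
        _ ≤ (2*α*(G.degree u₀:ℝ)^k) * ∑ v : V, S v := by
            refine mul_le_mul_of_nonneg_left ?_ h2aT
            exact sum_le_sum_of_subset_of_nonneg (filter_subset _ _) (fun v _ _ => hS0 v)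
        _ ≤ (2*α*(G.degree u₀:ℝ)^k) * M := mul_le_mul_of_nonneg_left hSsum h2aT
        _ = 2*α*(G.degree u₀:ℝ)^k*M := by ring
    -- big part reduces to a weighted sum over Ui
    have hbig1 : ∑ v ∈ B, S v^2
        ≤ ∑ u ∈ Ui, (G.degree u:ℝ)^(k*2) * ∑ v ∈ B.filter (fun v => u ∈ A v), ((A v).card:ℝ) := by
      have h1 : ∀ v ∈ B, S v^2 ≤ ∑ u ∈ A v, ((A v).card:ℝ) * (G.degree u:ℝ)^(k*2) := by
        intro v _
        have hcs : (∑ u ∈ A v, (G.degree u:ℝ)^k)^2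
            ≤ ((A v).card : ℝ) * ∑ u ∈ A v, ((G.degree u:ℝ)^k)^2 := by
          exact_mod_cast sq_sum_le_card_mul_sum_sq (s := A v) (f := fun u => (G.degree u:ℝ)^k)
        calc S v^2 ≤ ((A v).card:ℝ) * ∑ u ∈ A v, ((G.degree u:ℝ)^k)^2 := hcs
          _ = ∑ u ∈ A v, ((A v).card:ℝ) * (G.degree u:ℝ)^(k*2) := by
              rw [mul_sum]
              exact sum_congr rfl fun u _ => by rw [← pow_mul]
      calc ∑ v ∈ B, S v^2
          ≤ ∑ v ∈ B, ∑ u ∈ A v, ((A v).card:ℝ) * (G.degree u:ℝ)^(k*2) := sum_le_sum h1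
        _ = ∑ u ∈ Ui, ∑ v ∈ B.filter (fun v => u ∈ A v), ((A v).card:ℝ) * (G.degree u:ℝ)^(k*2) :=
            swap B _
        _ = ∑ u ∈ Ui, (G.degree u:ℝ)^(k*2) * ∑ v ∈ B.filter (fun v => u ∈ A v), ((A v).card:ℝ) := by
            refine sum_congr rfl fun u _ => ?_
            rw [mul_sum]
            exact sum_congr rfl fun v _ => by ring
    -- Hölder bound for the big part
    have hbigW : ∑ u ∈ Ui, (G.degree u:ℝ)^(k*2) * ∑ v ∈ B.filter (fun v => u ∈ A v), ((A v).card:ℝ)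
        ≤ ((G.degree u₀:ℝ)^(k+1)*M) ^ (((k:ℕ):ℝ)/((k+1:ℕ):ℝ)) *
          ((min (G.degree u₀:ℝ) (Ui.card:ℝ))^(2*k+1)*(2*α*(Ui.card:ℝ))) ^ ((1:ℝ)/((k+1:ℕ):ℝ)) := by
      rcases Nat.eq_zero_or_pos k with hk0 | hkpos
      · subst hk0
        have hE1 : ∑ u ∈ Ui, (∑ v ∈ B.filter (fun v => u ∈ A v), ((A v).card:ℝ))
            ≤ min (G.degree u₀:ℝ) (Ui.card:ℝ) * (2*α*(Ui.card:ℝ)) := by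
          calc ∑ u ∈ Ui, (∑ v ∈ B.filter (fun v => u ∈ A v), ((A v).card:ℝ))
              ≤ ∑ u ∈ Ui, min (G.degree u₀:ℝ) (Ui.card:ℝ) * ((B.filter (fun v => u ∈ A v)).card:ℝ) :=
                sum_le_sum hβle
            _ = min (G.degree u₀:ℝ) (Ui.card:ℝ) * ∑ u ∈ Ui, ((B.filter (fun v => u ∈ A v)).card:ℝ) := by
                rw [← mul_sum]
            _ ≤ min (G.degree u₀:ℝ) (Ui.card:ℝ) * (2*α*(Ui.card:ℝ)) :=
                mul_le_mul_of_nonneg_left hbbsum hE0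
        calc ∑ u ∈ Ui, (G.degree u:ℝ)^(0*2) * (∑ v ∈ B.filter (fun v => u ∈ A v), ((A v).card:ℝ))
            = ∑ u ∈ Ui, (∑ v ∈ B.filter (fun v => u ∈ A v), ((A v).card:ℝ)) := by
              refine sum_congr rfl fun u _ => ?_
              norm_num
          _ ≤ min (G.degree u₀:ℝ) (Ui.card:ℝ) * (2*α*(Ui.card:ℝ)) := hE1
          _ = ((G.degree u₀:ℝ)^(0+1)*M) ^ (((0:ℕ):ℝ)/((0+1:ℕ):ℝ)) *
              ((min (G.degree u₀:ℝ) (Ui.card:ℝ))^(2*0+1)*(2*α*(Ui.card:ℝ))) ^ ((1:ℝ)/((0+1:ℕ):ℝ)) := by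
              rw [show (((0:ℕ):ℝ)/((0+1:ℕ):ℝ)) = 0 by norm_num, Real.rpow_zero, one_mul,
                show ((1:ℝ)/((0+1:ℕ):ℝ)) = 1 by norm_num, Real.rpow_one]
              norm_num
      · have hk0R : (0:ℝ) < ((k:ℕ):ℝ) := by exact_mod_cast hkpos
        have hkne : ((k:ℕ):ℝ) ≠ 0 := ne_of_gt hk0R
        have hc0 : (0:ℝ) < ((k+1:ℕ):ℝ) := by exact_mod_cast Nat.succ_pos k
        have hcne : ((k+1:ℕ):ℝ) ≠ 0 := ne_of_gt hc0
        have hpq : Real.HolderConjugate (((k+1:ℕ):ℝ)/((k:ℕ):ℝ)) ((k+1:ℕ):ℝ) := by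
          refine Real.holderConjugate_iff.mpr ⟨?_, ?_⟩
          · rw [lt_div_iff₀ hk0R]
            push_cast
            linarith
          · rw [inv_div]
            push_cast
            have h1 : ((k:ℝ)+1) ≠ 0 := by positivity
            have h2 : ((k:ℝ)) ≠ 0 := by exact_mod_cast hkne
            field_simp
        have hold : ∑ u ∈ Ui, (G.degree u:ℝ)^(k*2) *
              (∑ v ∈ B.filter (fun v => u ∈ A v), ((A v).card:ℝ))
            ≤ (∑ u ∈ Ui, ((G.degree u:ℝ)^(k*2)) ^ (((k+1:ℕ):ℝ)/((k:ℕ):ℝ))) ^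
                (1/(((k+1:ℕ):ℝ)/((k:ℕ):ℝ))) *
              (∑ u ∈ Ui, (∑ v ∈ B.filter (fun v => u ∈ A v), ((A v).card:ℝ)) ^ ((k+1:ℕ):ℝ)) ^
                (1/((k+1:ℕ):ℝ)) :=
          Real.inner_le_Lp_mul_Lq_of_nonneg Ui hpq (fun u _ => pow_nonneg (Nat.cast_nonneg _) _)
            (fun u _ => sum_nonneg fun v _ => Nat.cast_nonneg _)
        have hfp : ∀ u ∈ Ui, ((G.degree u:ℝ)^(k*2)) ^ (((k+1:ℕ):ℝ)/((k:ℕ):ℝ))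
            = (G.degree u:ℝ)^((k+1)*2) := by
          intro u _
          rw [← Real.rpow_natCast (G.degree u:ℝ) (k*2), ← Real.rpow_mul (Nat.cast_nonneg _),
            show ((k*2:ℕ):ℝ) * (((k+1:ℕ):ℝ)/((k:ℕ):ℝ)) = (((k+1)*2:ℕ):ℝ) by
              push_cast
              have h2 : ((k:ℝ)) ≠ 0 := by exact_mod_cast hkne
              field_simp,
            Real.rpow_natCast]
        have hF1 : ∑ u ∈ Ui, ((G.degree u:ℝ)^(k*2)) ^ (((k+1:ℕ):ℝ)/((k:ℕ):ℝ))
            ≤ (G.degree u₀:ℝ)^(k+1) * M := by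
          calc ∑ u ∈ Ui, ((G.degree u:ℝ)^(k*2)) ^ (((k+1:ℕ):ℝ)/((k:ℕ):ℝ))
              = ∑ u ∈ Ui, (G.degree u:ℝ)^((k+1)*2) := sum_congr rfl hfp
            _ ≤ ∑ u ∈ Ui, (G.degree u₀:ℝ)^(k+1) * (G.degree u:ℝ)^(k+1) := by
                refine sum_le_sum fun u hu => ?_
                rw [show (G.degree u:ℝ)^((k+1)*2) = (G.degree u:ℝ)^(k+1) * (G.degree u:ℝ)^(k+1) by ring]
                exact mul_le_mul_of_nonneg_right
                  (pow_le_pow_left₀ (Nat.cast_nonneg _) (hTub u hu) _) (by positivity)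
            _ = (G.degree u₀:ℝ)^(k+1) * M := by rw [hMdef, ← mul_sum]
        have hF2 : ∑ u ∈ Ui, (∑ v ∈ B.filter (fun v => u ∈ A v), ((A v).card:ℝ)) ^ ((k+1:ℕ):ℝ)
            ≤ (min (G.degree u₀:ℝ) (Ui.card:ℝ))^(2*k+1) * (2*α*(Ui.card:ℝ)) := by
          calc ∑ u ∈ Ui, (∑ v ∈ B.filter (fun v => u ∈ A v), ((A v).card:ℝ)) ^ ((k+1:ℕ):ℝ)
              = ∑ u ∈ Ui, (∑ v ∈ B.filter (fun v => u ∈ A v), ((A v).card:ℝ)) ^ (k+1:ℕ) :=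
                sum_congr rfl fun u _ => Real.rpow_natCast _ (k+1)
            _ ≤ ∑ u ∈ Ui, (min (G.degree u₀:ℝ) (Ui.card:ℝ))^(2*k+1) *
                  ((B.filter (fun v => u ∈ A v)).card:ℝ) := by
                refine sum_le_sum fun u hu => ?_
                calc (∑ v ∈ B.filter (fun v => u ∈ A v), ((A v).card:ℝ)) ^ (k+1)
                    ≤ (min (G.degree u₀:ℝ) (Ui.card:ℝ) * ((B.filter (fun v => u ∈ A v)).card:ℝ))^(k+1) :=
                      pow_le_pow_left₀ (sum_nonneg fun v _ => by positivity) (hβle u hu) _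
                  _ = (min (G.degree u₀:ℝ) (Ui.card:ℝ))^(k+1) *
                      (((B.filter (fun v => u ∈ A v)).card:ℝ)^k *
                        ((B.filter (fun v => u ∈ A v)).card:ℝ)) := by ring
                  _ ≤ (min (G.degree u₀:ℝ) (Ui.card:ℝ))^(k+1) *
                      ((min (G.degree u₀:ℝ) (Ui.card:ℝ))^k *
                        ((B.filter (fun v => u ∈ A v)).card:ℝ)) := by
                      refine mul_le_mul_of_nonneg_left ?_ (pow_nonneg hE0 _)
                      exact mul_le_mul_of_nonneg_right
                        (pow_le_pow_left₀ (Nat.cast_nonneg _) (hbbE u hu) k) (Nat.cast_nonneg _)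
                  _ = (min (G.degree u₀:ℝ) (Ui.card:ℝ))^(2*k+1) *
                      ((B.filter (fun v => u ∈ A v)).card:ℝ) := by ring
            _ = (min (G.degree u₀:ℝ) (Ui.card:ℝ))^(2*k+1) *
                ∑ u ∈ Ui, ((B.filter (fun v => u ∈ A v)).card:ℝ) := by rw [← mul_sum]
            _ ≤ (min (G.degree u₀:ℝ) (Ui.card:ℝ))^(2*k+1) * (2*α*(Ui.card:ℝ)) :=
                mul_le_mul_of_nonneg_left hbbsum (pow_nonneg hE0 _)
        have hsum1nn : (0:ℝ) ≤ ∑ u ∈ Ui, ((G.degree u:ℝ)^(k*2)) ^ (((k+1:ℕ):ℝ)/((k:ℕ):ℝ)) :=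
          sum_nonneg fun u _ => Real.rpow_nonneg (by positivity) _
        have hsum2nn : (0:ℝ) ≤ ∑ u ∈ Ui,
            (∑ v ∈ B.filter (fun v => u ∈ A v), ((A v).card:ℝ)) ^ ((k+1:ℕ):ℝ) :=
          sum_nonneg fun u _ => Real.rpow_nonneg (sum_nonneg fun v _ => by positivity) _
        refine hold.trans ?_
        rw [one_div_div]
        refine mul_le_mul ?_ ?_ (Real.rpow_nonneg hsum2nn _)
          (Real.rpow_nonneg (mul_nonneg (pow_nonneg hT0 _) hM0) _)
        · exact Real.rpow_le_rpow hsum1nn hF1 (by positivity)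
        · exact Real.rpow_le_rpow hsum2nn hF2 (by positivity)
    -- conclude case 2
    have hC := caseC k α M (G.degree u₀:ℝ) (min (G.degree u₀:ℝ) (Ui.card:ℝ)) (Ui.card:ℝ)
      (∑ v ∈ B, S v^2) hα0 hT0 ht0 hM0 hE0 hEt hEM hK2
      (sum_nonneg fun v _ => sq_nonneg _) (hbig1.trans hbigW)
    have hB2 := caseB k α M (G.degree u₀:ℝ) (Ui.card:ℝ)
      (∑ v ∈ univ.filter (fun v => ¬ 2*α < ((A v).card:ℝ)), S v^2) hα0 hT0 ht0 hM0 hK2 hαt.le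
      (sum_nonneg fun v _ => sq_nonneg _) hsmall
    refine hfin _ (2^(k+2) + 2^(k+1)) (by positivity) ?_ ?_
    · have h : (2:ℝ)^(k+2) = 2^(k+1)*2 := pow_succ 2 (k+1)
      linarith
    · rw [hsplit]
      calc ∑ v ∈ B, S v^2 + ∑ v ∈ univ.filter (fun v => ¬ 2*α < ((A v).card:ℝ)), S v^2
          ≤ 2^(k+2) * α^((1:ℝ)/((k+1:ℕ):ℝ)) * M^((2:ℝ)-1/((k+1:ℕ):ℝ))
            + 2^(k+1) * α^((1:ℝ)/((k+1:ℕ):ℝ)) * M^((2:ℝ)-1/((k+1:ℕ):ℝ)) := add_le_add hC hB2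
        _ = (2^(k+2) + 2^(k+1)) * α^((1:ℝ)/((k+1:ℕ):ℝ)) * M^((2:ℝ)-1/((k+1:ℕ):ℝ)) := by ring
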